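/- arXiv:1003.5747 — 3 statements merged into one kernel-verified Lean document; each statement's English description precedes it below -/
import Mathlib

section
/- For all real numbers u and v, |u - v| ≤ |e^{iu} - e^{iv}| + |u - v|^{3/2}. -/
lemma abs_cexp_I_sub_one (t : ℝ) :
    ‖Complex.exp (Complex.I * t) - 1‖ = 2 * |Real.sin (t / 2)| := by
  have h : Complex.exp (Complex.I * t) - 1
      = Complex.ofReal (Real.cos t - 1) + Complex.ofReal (Real.sin t) * Complex.I := by
    rw [mul_comm, Complex.exp_mul_I]
    push_cast
    ring
  rw [h, Complex.norm_add_mul_I]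
  have h4 : Real.sin (t / 2) ^ 2 = 1 / 2 - Real.cos t / 2 := by
    have h5 := Real.cos_sq (t / 2)
    have h6 := Real.sin_sq_add_cos_sq (t / 2)
    rw [show 2 * (t / 2) = t by ring] at h5
    linarith
  have h2 : (Real.cos t - 1) ^ 2 + Real.sin t ^ 2 = (2 * |Real.sin (t / 2)|) ^ 2 := by
    have h3 := Real.sin_sq_add_cos_sq t
    rw [mul_pow, sq_abs]
    nlinarith
  rw [h2, Real.sqrt_sq (by positivity)]

theorem abs_sub_le_abs_cexp_sub_add (u v : ℝ) :
    |u - v| ≤ ‖Complex.exp (Complex.I * u) - Complex.exp (Complex.I * v)‖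
      + |u - v| ^ ((3 : ℝ) / 2) := by
  set x := |u - v| with hx
  have hx0 : 0 ≤ x := abs_nonneg _
  have hkey : ‖Complex.exp (Complex.I * u) - Complex.exp (Complex.I * v)‖
      = 2 * |Real.sin ((u - v) / 2)| := by
    have heq : Complex.exp (Complex.I * u) - Complex.exp (Complex.I * v)
        = Complex.exp (Complex.I * v) * (Complex.exp (Complex.I * ((u : ℂ) - v)) - 1) := by
      rw [mul_sub, ← Complex.exp_add]
      ring_nf
    rw [heq, norm_mul]
    have h1 : ‖Complex.exp (Complex.I * v)‖ = 1 := by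
      rw [mul_comm]
      exact Complex.norm_exp_ofReal_mul_I v
    have h2 := abs_cexp_I_sub_one (u - v)
    push_cast at h2 ⊢
    rw [h1, one_mul, h2]
  rcases le_or_gt 1 x with h1 | h1
  · calc x = x ^ (1 : ℝ) := (Real.rpow_one x).symm
    _ ≤ x ^ ((3 : ℝ) / 2) := Real.rpow_le_rpow_of_exponent_le h1 (by norm_num)
    _ ≤ _ := le_add_of_nonneg_left (by positivity)
  · rcases eq_or_lt_of_le hx0 with h0 | h0
    · rw [← h0]
      positivity
    · -- 0 < x < 1
      have hpi := Real.pi_gt_three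
      have hs : |Real.sin ((u - v) / 2)| = Real.sin (x / 2) := by
        rcases le_or_gt 0 (u - v) with h | h
        · rw [hx, abs_of_nonneg h]
          rw [abs_of_nonneg (Real.sin_nonneg_of_nonneg_of_le_pi (by positivity) (by
            have : u - v < 1 := by rw [← abs_of_nonneg h, ← hx]; exact h1
            linarith))]
        · have he : x = -(u - v) := by rw [hx, abs_of_neg h]
          rw [abs_of_nonpos (Real.sin_nonpos_of_nonpos_of_neg_pi_le (by linarith) (by
            have : -(u - v) < 1 := by rw [← he]; exact h1
            linarith))]
          rw [he, show -(u - v) / 2 = -((u - v) / 2) by ring, Real.sin_neg]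
      have hsin : x / 2 - (x / 2) ^ 3 / 4 < Real.sin (x / 2) :=
        by have := Real.sin_gt_sub_cube (x := x / 2) (by positivity); nlinarith [pow_pos (half_pos h0) 3]
      have hsin' : x - x ^ 3 / 16 < 2 * Real.sin (x / 2) := by nlinarith
      have hcube : x ^ 3 ≤ x ^ ((3 : ℝ) / 2) := by
        calc x ^ 3 = x ^ ((3 : ℕ) : ℝ) := (Real.rpow_natCast x 3).symm
        _ ≤ x ^ ((3 : ℝ) / 2) := Real.rpow_le_rpow_of_exponent_ge h0 h1.le (by norm_num)
      have hx3 : 0 ≤ x ^ 3 := by positivity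
      rw [hkey, hs]
      linarith
end

section
/- Let 0 < s and N = 2^{j+1} where 2^j sⱼ² = max_{k ≥ j} 2^k sₖ², with sₖ² = Σ_{2^k ≤ |n| < 2^{k+1}} |aₙ|². Then Σ_{n∈ℤ} (min(|n|, N))^{2s} |aₙ|² ≤ (1 + 2^{2s}) Σ_{|n| ≤ N} |n|^{2s} |aₙ|². -/
theorem truncated_sum_le_of_maximal_block (s : ℝ) (hs : 0 < s) (a : ℤ → ℂ)
    (hsum : Summable (fun n : ℤ => (n.natAbs : ℝ) * ‖a n‖ ^ 2))
    (S : ℕ → ℝ)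
    (hS : ∀ k, S k = ∑' n : ℤ, (if 2 ^ k ≤ n.natAbs ∧ n.natAbs < 2 ^ (k + 1)
                                  then ‖a n‖ ^ 2 else 0))
    (j : ℕ) (hj : ∀ k, j ≤ k → (2 : ℝ) ^ k * S k ≤ (2 : ℝ) ^ j * S j) :
    ∑' n : ℤ, ((min n.natAbs (2 ^ (j + 1)) : ℕ) : ℝ) ^ (2 * s) * ‖a n‖ ^ 2 ≤
      (1 + 2 ^ (2 * s)) *
        ∑' n : ℤ, (if n.natAbs ≤ 2 ^ (j + 1)
                    then (n.natAbs : ℝ) ^ (2 * s) * ‖a n‖ ^ 2 else 0) := by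
  have hs2 : (0:ℝ) < 2 * s := by linarith
  set A : ℤ → ℝ := fun n => ‖a n‖ ^ 2 with hA_def
  have hA0 : ∀ n, 0 ≤ A n := fun n => by simp only [hA_def]; positivity
  -- Summability of A
  have h1 : Summable (fun n : ℤ => if n = 0 then A 0 else 0) :=
    summable_of_ne_finset_zero (s := {0}) (by intro b hb; simp only [Finset.mem_singleton] at hb; simp [hb])
  have hA : Summable A := by
    apply Summable.of_nonneg_of_le hA0 (fun n => ?_) (hsum.add h1)
    by_cases h : n = 0
    · simp [h]
    · have hone : (1:ℝ) ≤ n.natAbs := by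
        exact_mod_cast Nat.one_le_iff_ne_zero.mpr (Int.natAbs_ne_zero.mpr h)
      simp only [h, if_false, add_zero, hA_def]
      nlinarith [sq_nonneg ‖a n‖]
  -- block and tail indicators
  set B : ℕ → ℤ → ℝ := fun k n => if 2 ^ k ≤ n.natAbs ∧ n.natAbs < 2 ^ (k + 1) then A n else 0 with hB_def
  set U : ℕ → ℤ → ℝ := fun k n => if 2 ^ k ≤ n.natAbs then A n else 0 with hU_def
  have hB0 : ∀ k n, 0 ≤ B k n := fun k n => by
    simp only [hB_def]; split_ifs; exacts [hA0 n, le_refl 0]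
  have hU0 : ∀ k n, 0 ≤ U k n := fun k n => by
    simp only [hU_def]; split_ifs; exacts [hA0 n, le_refl 0]
  have hBle : ∀ k n, B k n ≤ A n := fun k n => by
    simp only [hB_def]; split_ifs; exacts [le_refl _, hA0 n]
  have hUle : ∀ k n, U k n ≤ A n := fun k n => by
    simp only [hU_def]; split_ifs; exacts [le_refl _, hA0 n]
  have hB : ∀ k, Summable (B k) := fun k =>
    Summable.of_nonneg_of_le (hB0 k) (hBle k) hA
  have hU : ∀ k, Summable (U k) := fun k =>
    Summable.of_nonneg_of_le (hU0 k) (hUle k) hA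
  set T : ℕ → ℝ := fun k => ∑' n : ℤ, U k n with hT_def
  have hSk : ∀ k, S k = ∑' n : ℤ, B k n := hS
  have hS0 : ∀ k, 0 ≤ S k := fun k => by
    rw [hSk k]; exact tsum_nonneg (hB0 k)
  have hT0 : ∀ k, 0 ≤ T k := fun k => tsum_nonneg (hU0 k)
  -- telescoping
  have htel : ∀ k, T k = S k + T (k + 1) := by
    intro k
    have key : ∀ n : ℤ, U k n = B k n + U (k + 1) n := by
      intro n
      have hp : (2:ℕ) ^ (k+1) = 2 * 2 ^ k := by ring
      simp only [hU_def, hB_def]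
      split_ifs <;> first | ring1 | omega | (exfalso; omega)
    rw [hT_def]
    simp only []
    calc ∑' n : ℤ, U k n = ∑' n : ℤ, (B k n + U (k+1) n) := tsum_congr key
      _ = (∑' n : ℤ, B k n) + ∑' n : ℤ, U (k+1) n := Summable.tsum_add (hB k) (hU (k+1))
      _ = S k + T (k+1) := by rw [hSk k]
  -- tail bound : T m ≤ C / 2 ^ m
  set C : ℝ := ∑' n : ℤ, (n.natAbs : ℝ) * A n with hC_def
  have hC0 : 0 ≤ C := tsum_nonneg (fun n => by positivity)
  have hTle : ∀ m, T m ≤ C / 2 ^ m := by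
    intro m
    have : ∀ n : ℤ, U m n ≤ ((n.natAbs : ℝ) * A n) / 2 ^ m := by
      intro n
      simp only [hU_def]
      split_ifs with h
      · rw [le_div_iff₀ (by positivity)]
        have : ((2:ℝ) ^ m) ≤ (n.natAbs : ℝ) := by
          exact_mod_cast Nat.cast_le.mpr h |>.trans_eq (by push_cast; ring)
        nlinarith [hA0 n]
      · positivity
    calc T m ≤ ∑' n : ℤ, ((n.natAbs : ℝ) * A n) / 2 ^ m :=
          Summable.tsum_le_tsum this (hU m) (hsum.div_const _)
      _ = C / 2 ^ m := by rw [hC_def, tsum_div_const]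
  -- S (j+1+d) ≤ (1/2)^(d+1) * S j
  have hSd : ∀ d : ℕ, S (j + 1 + d) ≤ (1/2 : ℝ) ^ (d + 1) * S j := by
    intro d
    have e : (2:ℝ) ^ (j + 1 + d) = 2 ^ j * 2 ^ (d + 1) := by
      rw [← pow_add]; congr 1; omega
    have hjk := hj (j + 1 + d) (by omega)
    rw [e, mul_assoc] at hjk
    have h2 : (0:ℝ) < 2 ^ (d + 1) := by positivity
    have := le_of_mul_le_mul_left hjk (by positivity : (0:ℝ) < 2 ^ j)
    rw [div_pow, one_pow, div_mul_eq_mul_div, le_div_iff₀ h2]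
    linarith [this]
  -- the key inductive bound
  have hstep : ∀ d : ℕ, T (j + 1) ≤ (1 - (1/2 : ℝ) ^ d) * S j + T (j + 1 + d) := by
    intro d
    induction d with
    | zero => simp
    | succ d ih =>
      have e2 : j + 1 + (d + 1) = (j + 1 + d) + 1 := by omega
      rw [e2]
      have := htel (j + 1 + d)
      have hq : (1 - ((1:ℝ)/2) ^ (d+1)) * S j = (1 - (1/2:ℝ) ^ d) * S j + (1/2:ℝ) ^ (d+1) * S j := by
        ring
      linarith [hSd d, ih]
  have htail : T (j + 1) ≤ S j := by
    apply le_of_forall_pos_le_add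
    intro ε hε
    obtain ⟨m, hm⟩ := exists_nat_gt (C / ε)
    have hmlt : (m : ℝ) < 2 ^ m := by exact_mod_cast Nat.lt_two_pow_self
    have hCe : C / 2 ^ (j + 1 + m) ≤ ε := by
      have h2m : (0:ℝ) < 2 ^ m := by positivity
      have h2jm : (2:ℝ) ^ m ≤ 2 ^ (j + 1 + m) := by
        apply pow_le_pow_right₀ (by norm_num); omega
      have : C / ε < 2 ^ m := lt_trans hm hmlt
      have hC2 : C < ε * 2 ^ m := by
        rw [div_lt_iff₀ hε] at this; linarith
      calc C / 2 ^ (j + 1 + m) ≤ C / 2 ^ m := by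
            apply div_le_div_of_nonneg_left hC0 h2m h2jm |>.trans_eq rfl
            <;> skip
        _ ≤ ε := by rw [div_le_iff₀ h2m]; linarith
    have := hstep m
    have h12 : (0:ℝ) ≤ (1/2:ℝ) ^ m := by positivity
    nlinarith [hTle (j + 1 + m), hS0 j]
  -- split the left-hand side
  set N : ℕ := 2 ^ (j + 1) with hN_def
  set g : ℤ → ℝ := fun n => if n.natAbs ≤ N then (n.natAbs : ℝ) ^ (2*s) * A n else 0 with hg_def
  set hI : ℤ → ℝ := fun n => if N < n.natAbs then A n else 0 with hI_def
  have hg0 : ∀ n, 0 ≤ g n := fun n => by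
    simp only [hg_def]; split_ifs
    · have := hA0 n; positivity
    · exact le_refl 0
  have hI0 : ∀ n, 0 ≤ hI n := fun n => by
    simp only [hI_def]; split_ifs; exacts [hA0 n, le_refl 0]
  have hNr0 : (0:ℝ) ≤ (N:ℝ) := by positivity
  have hgle : ∀ n, g n ≤ (N:ℝ) ^ (2*s) * A n := by
    intro n
    simp only [hg_def]; split_ifs with h
    · have h1 : ((n.natAbs : ℝ)) ^ (2*s) ≤ (N:ℝ) ^ (2*s) :=
        Real.rpow_le_rpow (by positivity) (by exact_mod_cast h) (le_of_lt hs2)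
      exact mul_le_mul_of_nonneg_right h1 (hA0 n)
    · have := hA0 n; positivity
  have hg : Summable g :=
    Summable.of_nonneg_of_le hg0 hgle (hA.mul_left _)
  have hIle : ∀ n, hI n ≤ U (j+1) n := by
    intro n
    simp only [hI_def, hU_def]
    split_ifs with h h' h''
    · exact le_refl _
    · exact absurd (le_of_lt h) h'
    · exact hA0 n
    · exact le_refl 0
  have hIsum : Summable hI :=
    Summable.of_nonneg_of_le hI0 (fun n => (hIle n).trans (hUle _ n)) hA
  have hIT : ∑' n : ℤ, hI n ≤ S j :=
    (Summable.tsum_le_tsum hIle hIsum (hU (j+1))).trans htail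
  -- key comparison : N^(2s) * S j ≤ 2^(2s) * ∑' g
  have hterm : ∀ n : ℤ, (N:ℝ) ^ (2*s) * B j n ≤ 2 ^ (2*s) * g n := by
    intro n
    simp only [hB_def, hg_def]
    split_ifs with h h' h''
    · have hx0 : (0:ℝ) ≤ (n.natAbs:ℝ) := by positivity
      have hle : (N:ℝ) ≤ 2 * (n.natAbs:ℝ) := by
        have h2 : N ≤ 2 * n.natAbs := by
          have h1 := h.1
          have : N = 2 * 2 ^ j := by rw [hN_def]; ring
          omega
        exact_mod_cast h2
      calc (N:ℝ) ^ (2*s) * A n ≤ (2*(n.natAbs:ℝ)) ^ (2*s) * A n :=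
            mul_le_mul_of_nonneg_right (Real.rpow_le_rpow hNr0 hle hs2.le) (hA0 n)
        _ = 2 ^ (2*s) * ((n.natAbs:ℝ) ^ (2*s) * A n) := by
            rw [Real.mul_rpow (by norm_num) hx0]; ring
    · exact absurd h.2.le h'
    · rw [mul_zero]; have := hA0 n; positivity
    · rw [mul_zero, mul_zero]
  have key2 : (N:ℝ) ^ (2*s) * S j ≤ 2 ^ (2*s) * ∑' n : ℤ, g n := by
    calc (N:ℝ) ^ (2*s) * S j = ∑' n : ℤ, (N:ℝ) ^ (2*s) * B j n := by
          rw [hSk j, tsum_mul_left]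
      _ ≤ ∑' n : ℤ, 2 ^ (2*s) * g n :=
          Summable.tsum_le_tsum hterm ((hB j).mul_left _) (hg.mul_left _)
      _ = 2 ^ (2*s) * ∑' n : ℤ, g n := tsum_mul_left
  -- split the LHS pointwise
  have hsplit : ∀ n : ℤ, ((min n.natAbs N : ℕ) : ℝ) ^ (2*s) * A n
      = g n + (N:ℝ) ^ (2*s) * hI n := by
    intro n
    simp only [hg_def, hI_def]
    rcases le_or_gt n.natAbs N with h | h
    · rw [if_pos h, if_neg (not_lt.mpr h), min_eq_left h, mul_zero, add_zero]
    · rw [if_neg (not_le.mpr h), if_pos h, min_eq_right h.le, zero_add]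
  have hNpow0 : (0:ℝ) ≤ (N:ℝ) ^ (2*s) := Real.rpow_nonneg hNr0 _
  calc ∑' n : ℤ, ((min n.natAbs N : ℕ) : ℝ) ^ (2 * s) * A n
      = (∑' n : ℤ, g n) + ∑' n : ℤ, (N:ℝ) ^ (2*s) * hI n := by
        rw [tsum_congr hsplit]; exact Summable.tsum_add hg (hIsum.mul_left _)
    _ = (∑' n : ℤ, g n) + (N:ℝ) ^ (2*s) * ∑' n : ℤ, hI n := by rw [tsum_mul_left]
    _ ≤ (∑' n : ℤ, g n) + (N:ℝ) ^ (2*s) * S j :=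
        add_le_add_right (mul_le_mul_of_nonneg_left hIT hNpow0) _
    _ ≤ (∑' n : ℤ, g n) + 2 ^ (2*s) * ∑' n : ℤ, g n := add_le_add_right key2 _
    _ = (1 + 2 ^ (2*s)) * ∑' n : ℤ, g n := by ring
end

section
/- Let φ : ℝ → ℝ be continuous and 2π-periodic. For every β > 0 there exists α > 0 such that for all N ≥ 1, ∬ |φ(t₁)−φ(t₂)|³ min(N^{1+2s}, ‖t₁−t₂‖^{−1−2s}) dt₁ dt₂ ≤ c(s) α^{−2s} ‖φ‖_∞³ + β ∬ |φ(t₁)−φ(t₂)|² min(N^{1+2s}, ‖t₁−t₂‖^{−1−2s}) dt₁ dt₂, where 0 < s, ‖t‖ = dist(t, 2πℤ), and ∫ = (1/2π)∫_{−π}^π. -/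
open Real in
/-- distance from `t` to `2πℤ` -/
noncomputable def circleDist (t : ℝ) : ℝ := ⨅ k : ℤ, |t - 2 * π * k|

open Real

lemma circleDist_bddBelow (t : ℝ) : BddBelow (Set.range fun k : ℤ => |t - 2 * π * k|) :=
  ⟨0, by rintro x ⟨k, rfl⟩; positivity⟩

lemma circleDist_le (t : ℝ) (k : ℤ) : circleDist t ≤ |t - 2 * π * k| :=
  ciInf_le (circleDist_bddBelow t) k

lemma circleDist_nonneg (t : ℝ) : 0 ≤ circleDist t :=
  le_ciInf fun k => abs_nonneg _

lemma circleDist_eq_abs {t : ℝ} (ht : |t| ≤ π) : circleDist t = |t| := by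
  refine le_antisymm (by simpa using circleDist_le t 0) (le_ciInf fun k => ?_)
  rcases eq_or_ne k 0 with rfl | hk
  · simp
  · have h1 : (1:ℝ) ≤ |(k:ℝ)| := by exact_mod_cast Int.one_le_abs hk
    have h2 : 2 * π ≤ |2 * π * k| := by
      rw [abs_mul, abs_of_pos (by positivity : (0:ℝ) < 2 * π)]
      nlinarith [pi_pos]
    calc |t| ≤ 2 * π - π := by nlinarith [pi_pos]
    _ ≤ |2 * π * k| - |t| := by linarith
    _ ≤ |t - 2 * π * k| := by
        rw [abs_sub_comm]; linarith [abs_sub_abs_le_abs_sub (2 * π * (k:ℝ)) t]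

lemma circleDist_periodic : Function.Periodic circleDist (2 * π) := by
  intro t
  refine le_antisymm (le_ciInf fun k => ?_) (le_ciInf fun k => ?_)
  · calc circleDist (t + 2 * π) ≤ |t + 2 * π - 2 * π * ((k + 1 : ℤ) : ℝ)| := circleDist_le _ (k + 1)
    _ = |t - 2 * π * k| := by push_cast; ring_nf
  · calc circleDist t ≤ |t - 2 * π * ((k - 1 : ℤ) : ℝ)| := circleDist_le _ (k - 1)
    _ = |t + 2 * π - 2 * π * k| := by push_cast; ring_nf

lemma circleDist_lipschitz (a b : ℝ) : circleDist a ≤ circleDist b + |a - b| := by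
  refine sub_le_iff_le_add.mp (le_ciInf fun k => sub_le_iff_le_add.mpr ?_)
  calc circleDist a ≤ |a - 2 * π * k| := circleDist_le a k
  _ ≤ |b - 2 * π * k| + |a - b| := by
      have := abs_sub_abs_le_abs_sub (a - 2 * π * k) (b - 2 * π * k)
      have h2 : a - 2 * π * k - (b - 2 * π * k) = a - b := by ring
      rw [h2] at this; linarith

lemma continuous_circleDist : Continuous circleDist := by
  have : LipschitzWith 1 circleDist := by
    rw [lipschitzWith_iff_dist_le_mul]
    intro a b
    simp only [Real.dist_eq, NNReal.coe_one, one_mul]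
    rw [abs_sub_le_iff]
    constructor
    · linarith [circleDist_lipschitz a b]
    · have := circleDist_lipschitz b a
      rw [abs_sub_comm] at this; linarith
  exact this.continuous

lemma circleDist_lt_iff {t α : ℝ} (hα : 0 < α) :
    circleDist t < α → ∃ k : ℤ, |t - 2 * π * k| < α := by
  intro h
  obtain ⟨k, hk⟩ := exists_lt_of_ciInf_lt h
  exact ⟨k, hk⟩

lemma periodic_unif_cont {φ : ℝ → ℝ} (hc : Continuous φ)
    (hper : Function.Periodic φ (2 * π)) {β : ℝ} (hβ : 0 < β) :
    ∃ δ : ℝ, 0 < δ ∧ δ ≤ 1 ∧ ∀ x y : ℝ, |x - y| < δ → |φ x - φ y| < β := by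
  have hK : IsCompact (Set.Icc (-1 : ℝ) (2 * π + 1)) := isCompact_Icc
  have hUC := hK.uniformContinuousOn_of_continuous hc.continuousOn
  rw [Metric.uniformContinuousOn_iff] at hUC
  obtain ⟨δ0, hδ0, hδ⟩ := hUC β hβ
  refine ⟨min δ0 1, by positivity, min_le_right _ _, fun x y hxy => ?_⟩
  have h2π : (0:ℝ) < 2 * π := by positivity
  set k : ℤ := ⌊x / (2 * π)⌋ with hk
  have hx0 : 0 ≤ x - k * (2 * π) := Int.sub_floor_div_mul_nonneg x h2π
  have hx1 : x - k * (2 * π) < 2 * π := Int.sub_floor_div_mul_lt x h2π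
  have hxy1 : |x - y| < 1 := lt_of_lt_of_le hxy (min_le_right _ _)
  have hmemx : x - k * (2 * π) ∈ Set.Icc (-1 : ℝ) (2 * π + 1) := by
    constructor <;> nlinarith
  have hmemy : y - k * (2 * π) ∈ Set.Icc (-1 : ℝ) (2 * π + 1) := by
    rw [abs_lt] at hxy1
    constructor <;> nlinarith
  have hdist : dist (x - k * (2 * π)) (y - k * (2 * π)) < δ0 := by
    rw [Real.dist_eq]
    have : x - k * (2 * π) - (y - k * (2 * π)) = x - y := by ring
    rw [this]
    exact lt_of_lt_of_le hxy (min_le_left _ _)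
  have := hδ _ hmemx _ hmemy hdist
  rw [Real.dist_eq] at this
  rwa [hper.sub_int_mul_eq k, hper.sub_int_mul_eq k] at this

lemma periodic_bounded {φ : ℝ → ℝ} (hc : Continuous φ)
    (hper : Function.Periodic φ (2 * π)) (t : ℝ) : |φ t| ≤ ⨆ t : ℝ, |φ t| := by
  have hper' : Function.Periodic (fun t => |φ t|) (2 * π) := fun x => by simp [hper x]
  have hb : Bornology.IsBounded (Set.range fun t => |φ t|) :=
    hper'.isBounded_of_continuous (by positivity) (hc.abs)
  exact le_ciSup (hb.bddAbove) t

lemma F_continuous {α : ℝ} (hα : 0 < α) (r : ℝ) :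
    Continuous (fun u => (max (circleDist u) α) ^ r) :=
  (continuous_circleDist.max continuous_const).rpow_const
    (fun x => Or.inl (ne_of_gt (lt_of_lt_of_le hα (le_max_right _ _))))

lemma F_periodic (α r : ℝ) :
    Function.Periodic (fun u => (max (circleDist u) α) ^ r) (2 * π) := by
  intro x; simp [circleDist_periodic x]

lemma F_integral {s α : ℝ} (hs : 0 < s) (hα : 0 < α) (hαπ : α ≤ π) :
    ∫ u in (-π)..π, (max (circleDist u) α) ^ (-(1 + 2 * s)) ≤
      (2 + 1 / s) * α ^ (-(2 * s)) := by
  set r : ℝ := -(1 + 2 * s) with hr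
  have hFc : Continuous (fun u => (max (circleDist u) α) ^ r) := F_continuous hα r
  have hii : ∀ a b : ℝ, IntervalIntegrable (fun u => (max (circleDist u) α) ^ r)
      MeasureTheory.volume a b := fun a b => hFc.intervalIntegrable a b
  have hsplit : (∫ u in (-π)..π, (max (circleDist u) α) ^ r) =
      (∫ u in (-π)..(-α), (max (circleDist u) α) ^ r) +
      (∫ u in (-α)..α, (max (circleDist u) α) ^ r) +
      (∫ u in α..π, (max (circleDist u) α) ^ r) := by
    rw [intervalIntegral.integral_add_adjacent_intervals (hii _ _) (hii _ _),
      intervalIntegral.integral_add_adjacent_intervals (hii _ _) (hii _ _)]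
  -- tail integral value
  have htail : (∫ u in α..π, u ^ r) ≤ α ^ (-(2 * s)) / (2 * s) := by
    rw [integral_rpow (Or.inr ⟨by rw [hr]; intro h; nlinarith,
      by rw [Set.uIcc_of_le hαπ]; rintro ⟨h0, -⟩; linarith⟩)]
    have hr1 : r + 1 = -(2 * s) := by rw [hr]; ring
    rw [hr1]
    have h2s : (0:ℝ) < 2 * s := by linarith
    have heq : (π ^ (-(2*s)) - α ^ (-(2*s))) / -(2*s)
        = (α ^ (-(2*s)) - π ^ (-(2*s))) / (2*s) := by
      field_simp
      ring
    rw [heq]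
    exact (div_le_div_iff_of_pos_right h2s).mpr
      (sub_le_self _ (Real.rpow_nonneg pi_pos.le _))
  have hpos : (∫ u in α..π, (max (circleDist u) α) ^ r) = ∫ u in α..π, u ^ r := by
    apply intervalIntegral.integral_congr
    intro u hu
    rw [Set.uIcc_of_le hαπ] at hu
    obtain ⟨h1, h2⟩ := hu
    show (max (circleDist u) α) ^ r = u ^ r
    rw [circleDist_eq_abs (by rw [abs_of_nonneg (by linarith)]; linarith),
      abs_of_nonneg (by linarith), max_eq_left (by linarith)]
  have hneg : (∫ u in (-π)..(-α), (max (circleDist u) α) ^ r) = ∫ u in α..π, u ^ r := by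
    have : (∫ u in (-π)..(-α), (max (circleDist u) α) ^ r) =
        ∫ u in (-π)..(-α), (fun v : ℝ => (max (circleDist (-v)) α) ^ r) (-u) := by
      apply intervalIntegral.integral_congr; intro u _; simp
    rw [this, intervalIntegral.integral_comp_neg (fun v : ℝ => (max (circleDist (-v)) α) ^ r)]
    simp only [neg_neg]
    apply intervalIntegral.integral_congr
    intro u hu
    rw [Set.uIcc_of_le hαπ] at hu
    obtain ⟨h1, h2⟩ := hu
    show (max (circleDist (-u)) α) ^ r = u ^ r
    rw [circleDist_eq_abs (by rw [abs_neg, abs_of_nonneg (by linarith)]; linarith),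
      abs_neg, abs_of_nonneg (by linarith), max_eq_left (by linarith)]
  have hmid : (∫ u in (-α)..α, (max (circleDist u) α) ^ r) ≤ 2 * α ^ (-(2 * s)) := by
    have hb : ∀ u : ℝ, (max (circleDist u) α) ^ r ≤ α ^ r := fun u =>
      rpow_le_rpow_of_nonpos hα (le_max_right _ _) (by rw [hr]; nlinarith)
    calc (∫ u in (-α)..α, (max (circleDist u) α) ^ r) ≤ ∫ _ in (-α)..α, α ^ r :=
          intervalIntegral.integral_mono_on (by linarith) (hii _ _)
            (intervalIntegrable_const) (fun u _ => hb u)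
    _ = (α - -α) * α ^ r := by rw [intervalIntegral.integral_const, smul_eq_mul]
    _ = 2 * (α ^ (1:ℝ) * α ^ r) := by rw [Real.rpow_one]; ring
    _ = 2 * α ^ (-(2 * s)) := by
        rw [← Real.rpow_add hα]
        congr 1
        rw [hr]; ring_nf
  rw [hsplit, hpos, hneg]
  have h2s : 0 < 2 * s := by linarith
  calc (∫ u in α..π, u ^ r) + (∫ u in (-α)..α, (max (circleDist u) α) ^ r)
        + (∫ u in α..π, u ^ r)
      ≤ α ^ (-(2*s)) / (2*s) + 2 * α ^ (-(2*s)) + α ^ (-(2*s)) / (2*s) := by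
        linarith [htail, hmid]
  _ = (2 + 1 / s) * α ^ (-(2 * s)) := by field_simp; ring

lemma F_translate (α r t₁ : ℝ) :
    (∫ t₂ in (-π)..π, (max (circleDist (t₁ - t₂)) α) ^ r) =
      ∫ u in (-π)..π, (max (circleDist u) α) ^ r := by
  rw [intervalIntegral.integral_comp_sub_left (fun u => (max (circleDist u) α) ^ r) t₁]
  have h := (F_periodic α r).intervalIntegral_add_eq (t₁ - π) (-π)
  rw [show t₁ - π + 2 * π = t₁ + π by ring, show -π + 2 * π = π by ring] at h
  rw [show t₁ - -π = t₁ + π by ring]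
  exact h

set_option maxHeartbeats 1000000

open Real in
theorem cubic_integral_absorption (s : ℝ) (hs : 0 < s) :
    ∃ c : ℝ, 0 < c ∧
      ∀ (φ : ℝ → ℝ), Continuous φ → (∀ t, φ (t + 2 * π) = φ t) →
        ∀ β : ℝ, 0 < β → ∃ α : ℝ, 0 < α ∧ ∀ N : ℕ, 1 ≤ N →
          (1 / (2 * π)) ^ 2 * (∫ t₁ in (-π)..π, ∫ t₂ in (-π)..π,
              |φ t₁ - φ t₂| ^ 3 *
                min ((N : ℝ) ^ (1 + 2 * s)) (circleDist (t₁ - t₂) ^ (-(1 + 2 * s)))) ≤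
            c * α ^ (-(2 * s)) * (⨆ t : ℝ, |φ t|) ^ 3 +
              β * ((1 / (2 * π)) ^ 2 * (∫ t₁ in (-π)..π, ∫ t₂ in (-π)..π,
                |φ t₁ - φ t₂| ^ 2 *
                  min ((N : ℝ) ^ (1 + 2 * s)) (circleDist (t₁ - t₂) ^ (-(1 + 2 * s))))) := by
  have hπ : (0:ℝ) < π := pi_pos
  refine ⟨4 * (2 + 1 / s) / π, by positivity, ?_⟩
  intro φ hφc hφper β hβ
  have hper : Function.Periodic φ (2 * π) := hφper
  obtain ⟨δ, hδ0, hδ1, hδ⟩ := periodic_unif_cont hφc hper hβ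
  refine ⟨min δ π, lt_min hδ0 hπ, ?_⟩
  intro N hN
  set α : ℝ := min δ π with hαdef
  have hα0 : 0 < α := lt_min hδ0 hπ
  have hαπ : α ≤ π := min_le_right _ _
  set M : ℝ := ⨆ t : ℝ, |φ t| with hMdef
  have hMb : ∀ t, |φ t| ≤ M := periodic_bounded hφc hper
  have hM0 : 0 ≤ M := le_trans (abs_nonneg _) (hMb 0)
  set r : ℝ := -(1 + 2 * s) with hrdef
  have hN1 : (1:ℝ) ≤ (N:ℝ) := by exact_mod_cast hN
  have hNpos : (0:ℝ) < (N:ℝ) ^ (1 + 2 * s) := rpow_pos_of_pos (by linarith) _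
  set w : ℝ → ℝ → ℝ :=
    fun t₁ t₂ => min ((N : ℝ) ^ (1 + 2 * s)) (circleDist (t₁ - t₂) ^ r) with hwdef
  set F : ℝ → ℝ := fun u => (max (circleDist u) α) ^ r with hFdef
  have hw0 : ∀ t₁ t₂, 0 ≤ w t₁ t₂ := fun t₁ t₂ =>
    le_min hNpos.le (rpow_nonneg (circleDist_nonneg _) _)
  have hF0 : ∀ u, 0 ≤ F u := fun u => rpow_nonneg (le_trans hα0.le (le_max_right _ _)) _
  have hFb : ∀ u, F u ≤ α ^ r := fun u =>
    rpow_le_rpow_of_nonpos hα0 (le_max_right _ _) (by rw [hrdef]; nlinarith)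
  have hΔ : ∀ t₁ t₂, |φ t₁ - φ t₂| ≤ 2 * M := fun t₁ t₂ => by
    calc |φ t₁ - φ t₂| ≤ |φ t₁| + |φ t₂| := abs_sub _ _
    _ ≤ 2 * M := by linarith [hMb t₁, hMb t₂]
  -- pointwise key inequality
  have key : ∀ t₁ t₂ : ℝ, |φ t₁ - φ t₂| ^ 3 * w t₁ t₂ ≤
      β * (|φ t₁ - φ t₂| ^ 2 * w t₁ t₂) + 8 * M ^ 3 * F (t₁ - t₂) := by
    intro t₁ t₂
    have hFnn : 0 ≤ 8 * M ^ 3 * F (t₁ - t₂) := by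
      have := hF0 (t₁ - t₂); positivity
    by_cases hcd : circleDist (t₁ - t₂) < α
    · obtain ⟨k, hk⟩ := circleDist_lt_iff hα0 hcd
      have hxy : |t₁ - (t₂ + 2 * π * k)| < δ := by
        rw [show t₁ - (t₂ + 2 * π * k) = t₁ - t₂ - 2 * π * k by ring]
        exact lt_of_lt_of_le hk (min_le_left _ _)
      have hφk : φ (t₂ + 2 * π * k) = φ t₂ := by
        rw [show t₂ + 2 * π * k = t₂ + (k:ℝ) * (2 * π) by ring]
        exact (hper.int_mul k) t₂
      have hxb : |φ t₁ - φ t₂| ≤ β := by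
        have := hδ t₁ (t₂ + 2 * π * k) hxy
        rw [hφk] at this
        exact this.le
      have e1 : 0 ≤ (β - |φ t₁ - φ t₂|) * (|φ t₁ - φ t₂| ^ 2 * w t₁ t₂) :=
        mul_nonneg (by linarith) (mul_nonneg (pow_nonneg (abs_nonneg _) 2) (hw0 t₁ t₂))
      nlinarith [e1, hFnn]
    · push_neg at hcd
      have hwF : w t₁ t₂ ≤ F (t₁ - t₂) := by
        refine le_trans (min_le_right _ _) (le_of_eq ?_)
        rw [hFdef]; simp only []
        rw [max_eq_left hcd]
      have hx3 : |φ t₁ - φ t₂| ^ 3 ≤ 8 * M ^ 3 := by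
        calc |φ t₁ - φ t₂| ^ 3 ≤ (2 * M) ^ 3 :=
          pow_le_pow_left₀ (abs_nonneg _) (hΔ t₁ t₂) 3
        _ = 8 * M ^ 3 := by ring
      have hβnn : 0 ≤ β * (|φ t₁ - φ t₂| ^ 2 * w t₁ t₂) :=
        mul_nonneg hβ.le (mul_nonneg (pow_nonneg (abs_nonneg _) 2) (hw0 t₁ t₂))
      have : |φ t₁ - φ t₂| ^ 3 * w t₁ t₂ ≤ 8 * M ^ 3 * F (t₁ - t₂) :=
        mul_le_mul hx3 hwF (hw0 t₁ t₂) (by positivity)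
      linarith
  -- measure-theoretic setup
  set μ : MeasureTheory.Measure ℝ := MeasureTheory.volume.restrict (Set.Ioc (-π) π) with hμdef
  haveI hfin : MeasureTheory.IsFiniteMeasure μ := by
    constructor
    rw [hμdef, MeasureTheory.Measure.restrict_apply_univ, Real.volume_Ioc]
    exact ENNReal.ofReal_lt_top
  have hμuniv : μ Set.univ = ENNReal.ofReal (2 * π) := by
    rw [hμdef, MeasureTheory.Measure.restrict_apply_univ, Real.volume_Ioc]
    norm_num
    ring_nf
    rw [ENNReal.ofReal_mul (by positivity), ENNReal.ofReal_ofNat]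
  have hwm : Measurable (fun z : ℝ × ℝ => w z.1 z.2) := by
    apply Measurable.min measurable_const
    have : Measurable (fun z : ℝ × ℝ => circleDist (z.1 - z.2)) :=
      (continuous_circleDist.comp (continuous_fst.sub continuous_snd)).measurable
    measurability
  have hG3m : Measurable (fun z : ℝ × ℝ => |φ z.1 - φ z.2| ^ 3 * w z.1 z.2) := by
    have h1 : Measurable (fun z : ℝ × ℝ => |φ z.1 - φ z.2|) :=
      ((hφc.comp continuous_fst).sub (hφc.comp continuous_snd)).abs.measurable
    exact (h1.pow_const 3).mul hwm
  have hG2m : Measurable (fun z : ℝ × ℝ => |φ z.1 - φ z.2| ^ 2 * w z.1 z.2) := by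
    have h1 : Measurable (fun z : ℝ × ℝ => |φ z.1 - φ z.2|) :=
      ((hφc.comp continuous_fst).sub (hφc.comp continuous_snd)).abs.measurable
    exact (h1.pow_const 2).mul hwm
  have hG3i : MeasureTheory.Integrable (fun z : ℝ × ℝ => |φ z.1 - φ z.2| ^ 3 * w z.1 z.2)
      (μ.prod μ) := by
    refine (MeasureTheory.integrable_const (8 * M ^ 3 * (N:ℝ) ^ (1 + 2 * s))).mono'
      hG3m.aestronglyMeasurable (Filter.Eventually.of_forall fun z => ?_)
    rw [Real.norm_eq_abs, abs_of_nonneg (mul_nonneg (pow_nonneg (abs_nonneg _) 3) (hw0 _ _))]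
    have h3 : |φ z.1 - φ z.2| ^ 3 ≤ 8 * M ^ 3 := by
      calc |φ z.1 - φ z.2| ^ 3 ≤ (2 * M) ^ 3 := pow_le_pow_left₀ (abs_nonneg _) (hΔ _ _) 3
      _ = 8 * M ^ 3 := by ring
    exact mul_le_mul h3 (min_le_left _ _) (hw0 _ _) (by positivity)
  have hG2i : MeasureTheory.Integrable (fun z : ℝ × ℝ => |φ z.1 - φ z.2| ^ 2 * w z.1 z.2)
      (μ.prod μ) := by
    refine (MeasureTheory.integrable_const (4 * M ^ 2 * (N:ℝ) ^ (1 + 2 * s))).mono'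
      hG2m.aestronglyMeasurable (Filter.Eventually.of_forall fun z => ?_)
    rw [Real.norm_eq_abs, abs_of_nonneg (mul_nonneg (pow_nonneg (abs_nonneg _) 2) (hw0 _ _))]
    have h2 : |φ z.1 - φ z.2| ^ 2 ≤ 4 * M ^ 2 := by
      calc |φ z.1 - φ z.2| ^ 2 ≤ (2 * M) ^ 2 := pow_le_pow_left₀ (abs_nonneg _) (hΔ _ _) 2
      _ = 4 * M ^ 2 := by ring
    exact mul_le_mul h2 (min_le_left _ _) (hw0 _ _) (by positivity)
  have hFc : Continuous F := F_continuous hα0 r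
  have hGFi : MeasureTheory.Integrable (fun z : ℝ × ℝ => F (z.1 - z.2)) (μ.prod μ) := by
    refine (MeasureTheory.integrable_const (α ^ r)).mono'
      (hFc.comp (continuous_fst.sub continuous_snd)).measurable.aestronglyMeasurable
      (Filter.Eventually.of_forall fun z => ?_)
    rw [Real.norm_eq_abs, abs_of_nonneg (hF0 _)]
    exact hFb _
  -- convert iterated interval integrals to product integrals
  have hle : (-π : ℝ) ≤ π := by linarith
  have conv3 : (∫ t₁ in (-π)..π, ∫ t₂ in (-π)..π, |φ t₁ - φ t₂| ^ 3 * w t₁ t₂) =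
      ∫ z : ℝ × ℝ, |φ z.1 - φ z.2| ^ 3 * w z.1 z.2 ∂(μ.prod μ) := by
    simp_rw [intervalIntegral.integral_of_le hle]
    exact MeasureTheory.integral_integral hG3i
  have conv2 : (∫ t₁ in (-π)..π, ∫ t₂ in (-π)..π, |φ t₁ - φ t₂| ^ 2 * w t₁ t₂) =
      ∫ z : ℝ × ℝ, |φ z.1 - φ z.2| ^ 2 * w z.1 z.2 ∂(μ.prod μ) := by
    simp_rw [intervalIntegral.integral_of_le hle]
    exact MeasureTheory.integral_integral hG2i
  -- the F product integral
  have convF : (∫ z : ℝ × ℝ, F (z.1 - z.2) ∂(μ.prod μ)) =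
      2 * π * ∫ u in (-π)..π, F u := by
    have h := MeasureTheory.integral_integral
      (f := fun t₁ t₂ : ℝ => F (t₁ - t₂)) (μ := μ) (ν := μ) hGFi
    rw [← h]
    have inner : ∀ t₁ : ℝ, (∫ t₂, F (t₁ - t₂) ∂μ) = ∫ u in (-π)..π, F u := by
      intro t₁
      rw [hμdef, ← intervalIntegral.integral_of_le hle]
      exact F_translate α r t₁
    simp_rw [inner]
    rw [MeasureTheory.integral_const, MeasureTheory.measureReal_def, hμuniv, ENNReal.toReal_ofReal (by positivity),
      smul_eq_mul]
  have hIF : (∫ u in (-π)..π, F u) ≤ (2 + 1 / s) * α ^ (-(2 * s)) := F_integral hs hα0 hαπ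
  have hIF0 : 0 ≤ ∫ u in (-π)..π, F u := by
    apply intervalIntegral.integral_nonneg hle
    intro u _
    exact hF0 u
  -- main integral inequality
  have main : (∫ z : ℝ × ℝ, |φ z.1 - φ z.2| ^ 3 * w z.1 z.2 ∂(μ.prod μ)) ≤
      β * (∫ z : ℝ × ℝ, |φ z.1 - φ z.2| ^ 2 * w z.1 z.2 ∂(μ.prod μ)) +
        8 * M ^ 3 * (2 * π * ∫ u in (-π)..π, F u) := by
    rw [← convF, ← MeasureTheory.integral_const_mul β, ← MeasureTheory.integral_const_mul (8 * M ^ 3),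
      ← MeasureTheory.integral_add (hG2i.const_mul β) (hGFi.const_mul (8 * M ^ 3))]
    exact MeasureTheory.integral_mono hG3i
      ((hG2i.const_mul β).add (hGFi.const_mul (8 * M ^ 3))) (fun z => key z.1 z.2)
  -- conclude with arithmetic
  rw [conv3, conv2]
  set J2 : ℝ := ∫ z : ℝ × ℝ, |φ z.1 - φ z.2| ^ 2 * w z.1 z.2 ∂(μ.prod μ) with hJ2
  have hsq : (1 / (2 * π)) ^ 2 * (8 * M ^ 3 * (2 * π * ∫ u in (-π)..π, F u)) ≤
      4 * (2 + 1 / s) / π * α ^ (-(2 * s)) * M ^ 3 := by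
    have h1 : (1 / (2 * π)) ^ 2 * (8 * M ^ 3 * (2 * π * ∫ u in (-π)..π, F u)) =
        (4 / π) * M ^ 3 * ∫ u in (-π)..π, F u := by
      field_simp
      ring
    rw [h1]
    calc (4 / π) * M ^ 3 * ∫ u in (-π)..π, F u
        ≤ (4 / π) * M ^ 3 * ((2 + 1 / s) * α ^ (-(2 * s))) := by
          apply mul_le_mul_of_nonneg_left hIF (by positivity)
    _ = 4 * (2 + 1 / s) / π * α ^ (-(2 * s)) * M ^ 3 := by ring
  have hpos2 : (0:ℝ) ≤ (1 / (2 * π)) ^ 2 := by positivity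
  calc (1 / (2 * π)) ^ 2 *
        (∫ z : ℝ × ℝ, |φ z.1 - φ z.2| ^ 3 * w z.1 z.2 ∂(μ.prod μ))
      ≤ (1 / (2 * π)) ^ 2 * (β * J2 + 8 * M ^ 3 * (2 * π * ∫ u in (-π)..π, F u)) :=
        mul_le_mul_of_nonneg_left main hpos2
  _ = (1 / (2 * π)) ^ 2 * (8 * M ^ 3 * (2 * π * ∫ u in (-π)..π, F u)) +
      β * ((1 / (2 * π)) ^ 2 * J2) := by ring
  _ ≤ 4 * (2 + 1 / s) / π * α ^ (-(2 * s)) * M ^ 3 + β * ((1 / (2 * π)) ^ 2 * J2) := by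
      linarith [hsq]
end
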